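/- Let T be a trace whose events use k distinct thread identifiers, and let r be a read event in T. Then the cardinality of W1(r) is at most k, and the cardinality of W2(r) is at most k. -/
import Mathlib


/-- Operations an event can perform: read/write on a shared variable,
    acquire/release on a mutex. Variables and mutexes are named by naturals. -/
inductive Op : Type where
  | read : ℕ → Op
  | write : ℕ → Op
  | acq : ℕ → Op
  | rel : ℕ → Op
deriving DecidableEq

/-- An event carries a thread identifier, a trace position and an operation. -/
structure Event : Type where
  tid : ℕ
  pos : ℕ
  op : Op
deriving DecidableEq

/-- A trace is well formed if the recorded position of each event equals its index. -/
def WellFormed (T : List Event) : Prop :=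
  ∀ i : Fin T.length, (T.get i).pos = (i : ℕ)

/-- Program-order edge: same thread, earlier position. -/
def POEdge (T : List Event) (e f : Event) : Prop :=
  e ∈ T ∧ f ∈ T ∧ e.tid = f.tid ∧ e.pos < f.pos

/-- Release-acquire edge: a release of mutex `y` before an acquire of `y` in another
    thread, with no intervening acquire of `y` by a thread other than the releasing one. -/
def RADEdge (T : List Event) (e f : Event) : Prop :=
  e ∈ T ∧ f ∈ T ∧ ∃ y, e.op = Op.rel y ∧ f.op = Op.acq y ∧
    e.tid ≠ f.tid ∧ e.pos < f.pos ∧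
    ∀ g ∈ T, e.pos < g.pos → g.pos < f.pos → g.tid ≠ e.tid → g.op ≠ Op.acq y

/-- The happens-before relation: smallest (strict) partial order containing PO and RAD,
    i.e. the transitive closure of the PO and RAD edges. -/
def HB (T : List Event) : Event → Event → Prop :=
  Relation.TransGen (fun e f => POEdge T e f ∨ RADEdge T e f)

/-- Two events are unsynchronized if neither happens before the other. -/
def Unsync (T : List Event) (e f : Event) : Prop := ¬ HB T e f ∧ ¬ HB T f e

/-- Unsynchronized WRD candidates for the read `r` on variable `x`. -/
def W1 (T : List Event) (x : ℕ) (r : Event) : Set Event :=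
  {w | w ∈ T ∧ w.op = Op.write x ∧ Unsync T r w ∧
    ∀ w' ∈ T, w' ≠ w → w'.op = Op.write x → Unsync T r w' → ¬ HB T w w'}

/-- Synchronized WRD candidates for the read `r` on variable `x`. -/
def W2 (T : List Event) (x : ℕ) (r : Event) : Set Event :=
  {w | w ∈ T ∧ w.op = Op.write x ∧ HB T w r ∧
    ∀ w' ∈ T, w' ≠ w → w'.op = Op.write x → HB T w' r → ¬ HB T w w'}

/-- All WRD candidates. -/
def Wcand (T : List Event) (x : ℕ) (r : Event) : Set Event :=
  W1 T x r ∪ W2 T x r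

/-- Write-read dependency edge: the nearest preceding write on the same variable. -/
def WRDEdge (T : List Event) (w r : Event) : Prop :=
  w ∈ T ∧ r ∈ T ∧ ∃ x, w.op = Op.write x ∧ r.op = Op.read x ∧ w.pos < r.pos ∧
    ∀ g ∈ T, w.pos < g.pos → g.pos < r.pos → g.op ≠ Op.write x

/-- The schedulable happens-before relation: smallest partial order containing
    PO, RAD and WRD edges. -/
def SHB (T : List Event) : Event → Event → Prop :=
  Relation.TransGen (fun e f => POEdge T e f ∨ RADEdge T e f ∨ WRDEdge T e f)

/-- Every read event enjoys an initial write. -/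
def InitialWrites (T : List Event) : Prop :=
  ∀ r ∈ T, ∀ x, r.op = Op.read x → (W2 T x r).Nonempty

/-- A some-schedulable happens-before relation: any (strict) partial order satisfying
    PO and RAD such that every read is preceded by some of its WRD candidates. -/
structure SomeSHB (T : List Event) (R : Event → Event → Prop) : Prop where
  trans : ∀ {a b c : Event}, R a b → R b c → R a c
  irrefl : ∀ a : Event, ¬ R a a
  po : ∀ {e f : Event}, POEdge T e f → R e f
  rad : ∀ {e f : Event}, RADEdge T e f → R e f
  wrd : ∀ r ∈ T, ∀ x, r.op = Op.read x → ∃ w ∈ Wcand T x r, R w r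

/-- A WRD-candidate edge of the graph derived from `T` (labelled `W(r)`). -/
def CandEdge (T : List Event) (w r : Event) : Prop :=
  r ∈ T ∧ ∃ x, r.op = Op.read x ∧ w ∈ Wcand T x r

/-- An edge of the graph derived from `T`: an HB edge or a WRD-candidate edge. -/
def GEdge (T : List Event) (e f : Event) : Prop :=
  HB T e f ∨ CandEdge T e f

/-- A path in the graph derived from `T`: a nonempty sequence of edges
    visiting pairwise distinct nodes. -/
def GPath (T : List Event) (e f : Event) : Prop :=
  ∃ (n : ℕ) (p : Fin (n + 1) → Event), 0 < n ∧ Function.Injective p ∧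
    p 0 = e ∧ p (Fin.last n) = f ∧
    ∀ i : Fin n, GEdge T (p i.castSucc) (p i.succ)

lemma pos_inj {T : List Event} (hwf : WellFormed T) {e f : Event}
    (he : e ∈ T) (hf : f ∈ T) (hpos : e.pos = f.pos) : e = f := by
  obtain ⟨i, hi⟩ := List.mem_iff_get.mp he
  obtain ⟨j, hj⟩ := List.mem_iff_get.mp hf
  have : (i : ℕ) = (j : ℕ) := by
    have h1 := hwf i
    have h2 := hwf j
    rw [hi] at h1; rw [hj] at h2
    omega
  rw [← hi, ← hj]
  congr 1
  exact Fin.ext this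

lemma card_le_of_tid_inj {T : List Event} (S : Set Event)
    (hsub : ∀ e ∈ S, e ∈ T)
    (hinj : Set.InjOn Event.tid S) :
    S.ncard ≤ (T.map Event.tid).toFinset.card := by
  have hfin : S.Finite := Set.Finite.subset (List.finite_toSet T) hsub
  have himg : Event.tid '' S ⊆ ↑(T.map Event.tid).toFinset := by
    rintro t ⟨e, he, rfl⟩
    simp only [Finset.coe_sort_coe, List.coe_toFinset, List.mem_map, Set.mem_setOf_eq,
      Finset.mem_coe, List.mem_toFinset]
    exact ⟨e, hsub e he, rfl⟩
  calc S.ncard = (Event.tid '' S).ncard := (Set.ncard_image_of_injOn hinj).symm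
    _ ≤ ((T.map Event.tid).toFinset : Set ℕ).ncard :=
        Set.ncard_le_ncard himg (Finset.finite_toSet _)
    _ = (T.map Event.tid).toFinset.card := Set.ncard_coe_finset _

/-- the number of unsynchronized (resp. synchronized) WRD candidates of a
    read is at most the number of distinct thread identifiers used by events of `T`. -/
theorem stmt1 (T : List Event) (hwf : WellFormed T) (x : ℕ) (r : Event)
    (hr : r ∈ T) (hrx : r.op = Op.read x) :
    (W1 T x r).ncard ≤ (T.map Event.tid).toFinset.card ∧
    (W2 T x r).ncard ≤ (T.map Event.tid).toFinset.card := by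
  constructor
  · apply card_le_of_tid_inj
    · exact fun e he => he.1
    · intro w hw w' hw' htid
      by_contra hne
      obtain ⟨hwT, hwop, hwu, hwmax⟩ := hw
      obtain ⟨hw'T, hw'op, hw'u, hw'max⟩ := hw'
      rcases lt_trichotomy w.pos w'.pos with h | h | h
      · exact hwmax w' hw'T (Ne.symm hne) hw'op hw'u
          (Relation.TransGen.single (Or.inl ⟨hwT, hw'T, htid, h⟩))
      · exact hne (pos_inj hwf hwT hw'T h)
      · exact hw'max w hwT hne hwop hwu
          (Relation.TransGen.single (Or.inl ⟨hw'T, hwT, htid.symm, h⟩))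
  · apply card_le_of_tid_inj
    · exact fun e he => he.1
    · intro w hw w' hw' htid
      by_contra hne
      obtain ⟨hwT, hwop, hwhb, hwmax⟩ := hw
      obtain ⟨hw'T, hw'op, hw'hb, hw'max⟩ := hw'
      rcases lt_trichotomy w.pos w'.pos with h | h | h
      · exact hwmax w' hw'T (Ne.symm hne) hw'op hw'hb
          (Relation.TransGen.single (Or.inl ⟨hwT, hw'T, htid, h⟩))
      · exact hne (pos_inj hwf hwT hw'T h)
      · exact hw'max w hwT hne hwop hwhb
          (Relation.TransGen.single (Or.inl ⟨hw'T, hwT, htid.symm, h⟩))
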